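/- Let p be a prime, q a power of p, and a an integer with 0 ≤ a ≤ q − 1. Let z₁, z₂ ∈ ℤ with z₁ ≡ z₂ (mod q). Then the generalized binomial coefficients satisfy C(z₁, a) ≡ C(z₂, a) (mod p). -/

import Mathlib

open Finset

/-- The generalized binomial coefficient `C(z, a) = z(z-1)⋯(z-a+1)/a!` for `z : ℤ`;
the division is exact, so this is the usual integer value. -/
def intChoose (z : ℤ) (a : ℕ) : ℤ := (∏ i ∈ range a, (z - i)) / (a.factorial : ℤ)

lemma prod_eq_fac_mul_choose (z : ℤ) (a : ℕ) :
    ∏ i ∈ range a, (z - i) = (a.factorial : ℤ) * Ring.choose z a := by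
  have h1 : ∏ i ∈ range a, (z - i) = (descPochhammer ℤ a).eval z := by
    induction a with
    | zero => simp
    | succ n ih => rw [prod_range_succ, descPochhammer_succ_eval, ih]
  rw [h1, Polynomial.eval_eq_smeval, Ring.descPochhammer_eq_factorial_smul_choose,
    nsmul_eq_mul]

lemma intChoose_eq (z : ℤ) (a : ℕ) : intChoose z a = Ring.choose z a := by
  rw [intChoose, prod_eq_fac_mul_choose,
    Int.mul_ediv_cancel_left _ (by exact_mod_cast a.factorial_ne_zero)]

lemma intChoose_natCast (n a : ℕ) : intChoose (n : ℤ) a = (n.choose a : ℤ) := by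
  rw [intChoose_eq, Ring.choose_natCast (R := ℤ)]

lemma natStep (p : ℕ) (hp : p.Prime) (m a : ℕ) (ha : a ≤ p ^ m - 1) (n : ℕ) :
    (p ^ m + n).choose a ≡ n.choose a [MOD p] := by
  haveI : NeZero p := ⟨hp.ne_zero⟩
  have hq1 : 1 ≤ p ^ m := Nat.one_le_pow _ _ hp.pos
  rw [← ZMod.natCast_eq_natCast_iff, Nat.add_choose_eq]
  push_cast
  rw [Finset.sum_eq_single ((0, a) : ℕ × ℕ)]
  · simp
  · intro b hb hne
    have hb1 : b.1 + b.2 = a := Finset.HasAntidiagonal.mem_antidiagonal.1 hb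
    have h1 : b.1 ≠ 0 := by
      rintro h0
      exact hne (Prod.ext h0 (by omega))
    have h2 : b.1 ≠ p ^ m := by omega
    have : p ∣ (p ^ m).choose b.1 := Nat.Prime.dvd_choose_pow hp h1 h2
    rw [show (((p ^ m).choose b.1 : ℕ) : ZMod p) = 0 from
        (ZMod.natCast_eq_zero_iff _ _).2 this, zero_mul]
  · intro h
    exact absurd (Finset.HasAntidiagonal.mem_antidiagonal.2 (by simp)) h

lemma natInv (p : ℕ) (hp : p.Prime) (m a : ℕ) (ha : a ≤ p ^ m - 1) (n k : ℕ) :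
    (n + k * p ^ m).choose a ≡ n.choose a [MOD p] := by
  induction k with
  | zero => simpa using Nat.ModEq.refl _
  | succ k ih =>
    have h1 : n + (k + 1) * p ^ m = p ^ m + (n + k * p ^ m) := by ring
    rw [h1]
    exact (natStep p hp m a ha (n + k * p ^ m)).trans ih

lemma natCong (p : ℕ) (hp : p.Prime) (m a : ℕ) (ha : a ≤ p ^ m - 1) (n₁ n₂ : ℕ)
    (h : n₁ ≡ n₂ [MOD p ^ m]) : n₁.choose a ≡ n₂.choose a [MOD p] := by
  wlog hle : n₁ ≤ n₂ generalizing n₁ n₂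
  · exact (this n₂ n₁ h.symm (le_of_not_ge hle)).symm
  obtain ⟨k, hk⟩ := (Nat.modEq_iff_dvd' hle).1 h
  have hn : n₂ = n₁ + k * p ^ m := by rw [mul_comm]; omega
  rw [hn]
  exact (natInv p hp m a ha n₁ k).symm

lemma keystep (p : ℕ) (a : ℕ) (z w : ℤ) (h : z ≡ w [ZMOD (p : ℤ) * a.factorial]) :
    intChoose z a ≡ intChoose w a [ZMOD (p : ℤ)] := by
  have hprod : (∏ i ∈ range a, (z - i)) ≡ (∏ i ∈ range a, (w - i))
      [ZMOD (p : ℤ) * a.factorial] := by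
    induction (range a) using Finset.induction with
    | empty => rfl
    | insert _ _ hni ih =>
      rw [prod_insert hni, prod_insert hni]
      exact (h.sub_right _).mul ih
  have hdvd : ((p : ℤ) * a.factorial) ∣
      (∏ i ∈ range a, (w - i)) - (∏ i ∈ range a, (z - i)) := hprod.dvd
  rw [prod_eq_fac_mul_choose, prod_eq_fac_mul_choose, ← mul_sub] at hdvd
  rw [mul_comm] at hdvd
  have hfac : (a.factorial : ℤ) ≠ 0 := by exact_mod_cast a.factorial_ne_zero
  have : (p : ℤ) ∣ Ring.choose w a - Ring.choose z a :=
    (mul_dvd_mul_iff_left hfac).1 hdvd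
  rw [intChoose_eq, intChoose_eq]
  exact Int.modEq_iff_dvd.mpr this

/-- Lemma 3.0 -/
theorem stmt_11 (p : ℕ) (hp : p.Prime) (m q : ℕ) (hq : q = p ^ m)
    (a : ℕ) (ha : a ≤ q - 1) (z₁ z₂ : ℤ) (h : z₁ ≡ z₂ [ZMOD (q : ℤ)]) :
    intChoose z₁ a ≡ intChoose z₂ a [ZMOD (p : ℤ)] := by
  subst hq
  have hq0 : (0 : ℤ) < ((p ^ m : ℕ) : ℤ) := by exact_mod_cast pow_pos hp.pos m
  set N : ℤ := ((p ^ m : ℕ) : ℤ) * ((p : ℤ) * a.factorial) with hN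
  have hN0 : 0 < N := by
    have h1 : (0 : ℤ) < (p : ℤ) := by exact_mod_cast hp.pos
    have h2 : (0 : ℤ) < (a.factorial : ℤ) := by exact_mod_cast a.factorial_pos
    exact mul_pos hq0 (mul_pos h1 h2)
  set n₁ : ℕ := (z₁ % N).toNat with hn₁
  set n₂ : ℕ := (z₂ % N).toNat with hn₂
  have hc₁ : z₁ ≡ (n₁ : ℤ) [ZMOD N] := by
    rw [hn₁, Int.toNat_of_nonneg (Int.emod_nonneg _ hN0.ne')]
    exact (Int.emod_emod_of_dvd _ dvd_rfl).symm
  have hc₂ : z₂ ≡ (n₂ : ℤ) [ZMOD N] := by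
    rw [hn₂, Int.toNat_of_nonneg (Int.emod_nonneg _ hN0.ne')]
    exact (Int.emod_emod_of_dvd _ dvd_rfl).symm
  -- congruence mod p * a!
  have hdvd1 : ((p : ℤ) * a.factorial) ∣ N := Dvd.intro_left _ rfl
  have hdvd2 : ((p ^ m : ℕ) : ℤ) ∣ N := Dvd.intro _ rfl
  have hk₁ : intChoose z₁ a ≡ intChoose (n₁ : ℤ) a [ZMOD (p : ℤ)] :=
    keystep p a z₁ (n₁ : ℤ) (hc₁.of_dvd hdvd1)
  have hk₂ : intChoose z₂ a ≡ intChoose (n₂ : ℤ) a [ZMOD (p : ℤ)] :=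
    keystep p a z₂ (n₂ : ℤ) (hc₂.of_dvd hdvd1)
  -- n₁ ≡ n₂ mod p^m
  have hq12 : (n₁ : ℤ) ≡ (n₂ : ℤ) [ZMOD ((p ^ m : ℕ) : ℤ)] :=
    ((hc₁.of_dvd hdvd2).symm.trans h).trans (hc₂.of_dvd hdvd2)
  have hqnat : n₁ ≡ n₂ [MOD p ^ m] := Int.natCast_modEq_iff.mp hq12
  have hmid : (n₁.choose a : ℤ) ≡ (n₂.choose a : ℤ) [ZMOD (p : ℤ)] :=
    Int.natCast_modEq_iff.mpr (natCong p hp m a ha n₁ n₂ hqnat)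
  calc intChoose z₁ a ≡ intChoose (n₁ : ℤ) a [ZMOD (p : ℤ)] := hk₁
    _ = (n₁.choose a : ℤ) := intChoose_natCast n₁ a
    _ ≡ (n₂.choose a : ℤ) [ZMOD (p : ℤ)] := hmid
    _ = intChoose (n₂ : ℤ) a := (intChoose_natCast n₂ a).symm
    _ ≡ intChoose z₂ a [ZMOD (p : ℤ)] := hk₂.symm
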